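/- Let m, n ≥ 1 be natural numbers with m·n ≥ 3, and let Gr(m,n) be the m×n grid graph, i.e., the simple graph on Fin m × Fin n in which (i,j) and (i',j') are adjacent iff |i − i'| + |j − j'| = 1. Then there exist ⌊mn/3⌋ pairwise disjoint 3-element subsets of the vertex set Fin m × Fin n, each of which induces a connected subgraph of Gr(m,n). -/

import Mathlib

/-- The `m × n` grid graph on `Fin m × Fin n`: `(i,j)` and `(i',j')` are adjacent iff
`|i − i'| + |j − j'| = 1`. -/
def gridGraph (m n : ℕ) : SimpleGraph (Fin m × Fin n) where
  Adj p q :=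
    |((p.1 : ℕ) : ℤ) - ((q.1 : ℕ) : ℤ)| + |((p.2 : ℕ) : ℤ) - ((q.2 : ℕ) : ℤ)| = 1
  symm := by
    constructor
    intro p q h
    rw [abs_sub_comm (((q.1 : ℕ) : ℤ)) (((p.1 : ℕ) : ℤ)),
      abs_sub_comm (((q.2 : ℕ) : ℤ)) (((p.2 : ℕ) : ℤ))]
    exact h
  loopless := by
    constructor
    intro p h
    simp at h

/-- Snake (boustrophedon) ordering of the grid. -/
def snake (m n k : ℕ) (hm : 0 < m) (hn : 0 < n) : Fin m × Fin n :=
  (⟨k / n % m, Nat.mod_lt _ hm⟩,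
   ⟨if k / n % 2 = 0 then k % n else n - 1 - k % n, by
      have := Nat.mod_lt k hn
      split <;> omega⟩)

lemma snake_fst {m n k : ℕ} (hm : 0 < m) (hn : 0 < n) (hk : k < m * n) :
    ((snake m n k hm hn).1 : ℕ) = k / n := by
  have : k / n < m := Nat.div_lt_of_lt_mul (by rwa [mul_comm] at hk)
  simp [snake, Nat.mod_eq_of_lt this]

lemma snake_snd {m n k : ℕ} (hm : 0 < m) (hn : 0 < n) :
    ((snake m n k hm hn).2 : ℕ) = if k / n % 2 = 0 then k % n else n - 1 - k % n := rfl

lemma snake_inj {m n k l : ℕ} (hm : 0 < m) (hn : 0 < n) (hk : k < m * n) (hl : l < m * n)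
    (h : snake m n k hm hn = snake m n l hm hn) : k = l := by
  have h1 : k / n = l / n := by
    have := congrArg (fun p => (p.1 : ℕ)) h
    simpa [snake_fst hm hn hk, snake_fst hm hn hl] using this
  have h2' := congrArg (fun p => (p.2 : ℕ)) h
  simp only [snake_snd, h1] at h2'
  have hkm := Nat.mod_lt k hn
  have hlm := Nat.mod_lt l hn
  have h2 : k % n = l % n := by split at h2' <;> omega
  have ek := Nat.div_add_mod k n
  have el := Nat.div_add_mod l n
  calc k = n * (k / n) + k % n := ek.symm
  _ = n * (l / n) + l % n := by rw [h1, h2]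
  _ = l := el

lemma abs_eq_one_helper (a b c d : ℕ)
    (h : (a = b ∧ (c + 1 = d ∨ d + 1 = c)) ∨ (c = d ∧ (a + 1 = b ∨ b + 1 = a))) :
    |((a : ℤ)) - b| + |((c : ℤ)) - d| = 1 := by
  rcases abs_cases ((a : ℤ) - b) with ⟨h1, _⟩ | ⟨h1, _⟩ <;>
    rcases abs_cases ((c : ℤ) - d) with ⟨h2, _⟩ | ⟨h2, _⟩ <;>
    rw [h1, h2] <;> omega

lemma snake_adj {m n k : ℕ} (hm : 0 < m) (hn : 0 < n) (hk : k + 1 < m * n) :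
    (gridGraph m n).Adj (snake m n k hm hn) (snake m n (k + 1) hm hn) := by
  have hk' : k < m * n := by omega
  have hd := Nat.div_add_mod k n
  have hmlt := Nat.mod_lt k hn
  show |((((snake m n k hm hn).1 : ℕ)) : ℤ) - ((((snake m n (k+1) hm hn).1 : ℕ)) : ℤ)| +
      |((((snake m n k hm hn).2 : ℕ)) : ℤ) - ((((snake m n (k+1) hm hn).2 : ℕ)) : ℤ)| = 1
  rw [snake_fst hm hn hk', snake_fst hm hn hk, snake_snd, snake_snd]
  apply abs_eq_one_helper
  rcases Nat.lt_or_ge (k % n + 1) n with hj | hj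
  · -- same row
    have e1 : k + 1 = n * (k / n) + (k % n + 1) := by omega
    have hdiv : (k + 1) / n = k / n := by
      rw [e1, Nat.mul_add_div hn, Nat.div_eq_of_lt hj, Nat.add_zero]
    have hmod : (k + 1) % n = k % n + 1 := by
      rw [e1, Nat.mul_add_mod, Nat.mod_eq_of_lt hj]
    rw [hdiv, hmod]
    left
    refine ⟨rfl, ?_⟩
    split <;> omega
  · -- wrap to next row
    have hj' : k % n + 1 = n := by omega
    have e1 : k + 1 = n * (k / n + 1) := by
      rw [Nat.mul_add, Nat.mul_one]; omega
    have hdiv : (k + 1) / n = k / n + 1 := by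
      rw [e1, Nat.mul_div_cancel_left _ hn]
    have hmod : (k + 1) % n = 0 := by
      rw [e1, Nat.mul_mod_right]
    rw [hdiv, hmod]
    right
    constructor
    · split <;> split <;> omega
    · omega

lemma triple_connected {V : Type*} (G : SimpleGraph V) {a b c : V}
    (hab : G.Adj a b) (hbc : G.Adj b c) :
    (G.induce ({a, b, c} : Set V)).Connected := by
  rw [SimpleGraph.connected_iff]
  have hb : b ∈ ({a, b, c} : Set V) := by simp
  have key : ∀ x : ({a, b, c} : Set V),
      (G.induce ({a, b, c} : Set V)).Reachable x ⟨b, hb⟩ := by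
    rintro ⟨x, rfl | rfl | rfl⟩
    · exact SimpleGraph.Adj.reachable (by exact hab)
    · exact SimpleGraph.Reachable.refl _
    · exact SimpleGraph.Adj.reachable (by exact hbc.symm)
  exact ⟨fun x y => (key x).trans (key y).symm, ⟨⟨b, hb⟩⟩⟩

/-- the vertices of the `m × n` grid graph (`m·n ≥ 3`) contain
`⌊mn/3⌋` pairwise disjoint 3-element subsets, each inducing a connected subgraph. -/
theorem grid_packing_connected_triples (m n : ℕ) (hm : 1 ≤ m) (hn : 1 ≤ n)
    (hmn : 3 ≤ m * n) :
    ∃ f : Fin (m * n / 3) → Finset (Fin m × Fin n),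
      (∀ i, (f i).card = 3) ∧
      (∀ i j, i ≠ j → Disjoint (f i) (f j)) ∧
      (∀ i, ((gridGraph m n).induce (↑(f i) : Set (Fin m × Fin n))).Connected) := by
  have hm0 : 0 < m := hm
  have hn0 : 0 < n := hn
  refine ⟨fun i => {snake m n (3 * i) hm0 hn0, snake m n (3 * i + 1) hm0 hn0,
    snake m n (3 * i + 2) hm0 hn0}, ?_, ?_, ?_⟩
  · intro i
    have hbi := i.isLt
    refine Finset.card_eq_three.mpr ⟨_, _, _, ?_, ?_, ?_, rfl⟩ <;>
      · intro h
        have := snake_inj hm0 hn0 (by omega) (by omega) h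
        omega
  · intro i j hij
    have hij' : (i : ℕ) ≠ j := fun h => hij (Fin.ext h)
    have hbi := i.isLt
    have hbj := j.isLt
    rw [Finset.disjoint_left]
    intro x hx hx'
    simp only [Finset.mem_insert, Finset.mem_singleton] at hx hx'
    rcases hx with rfl | rfl | rfl <;> rcases hx' with h | h | h <;>
      · have := snake_inj hm0 hn0 (by omega) (by omega) h
        omega
  · intro i
    have hbi := i.isLt
    have h1 := snake_adj (m := m) (n := n) (k := 3 * (i : ℕ)) hm0 hn0 (by omega)
    have h2 := snake_adj (m := m) (n := n) (k := 3 * (i : ℕ) + 1) hm0 hn0 (by omega)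
    have e : 3 * (i : ℕ) + 1 + 1 = 3 * (i : ℕ) + 2 := by omega
    rw [e] at h2
    have hs : (↑({snake m n (3 * (i : ℕ)) hm0 hn0, snake m n (3 * (i : ℕ) + 1) hm0 hn0,
        snake m n (3 * (i : ℕ) + 2) hm0 hn0} : Finset (Fin m × Fin n)) : Set (Fin m × Fin n)) =
        ({snake m n (3 * (i : ℕ)) hm0 hn0, snake m n (3 * (i : ℕ) + 1) hm0 hn0,
        snake m n (3 * (i : ℕ) + 2) hm0 hn0} : Set (Fin m × Fin n)) := by simp
    rw [hs]
    exact triple_connected _ h1 h2
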